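/- arXiv:1901.10524 — 3 statements merged into one kernel-verified Lean document; each statement's English description precedes it below -/
import Mathlib

section
/- Let Δ and Δ' = Δ + E be self-adjoint N×N complex matrices with ‖E‖ < 1, where ‖·‖ is the operator norm. Then the Cayley transforms satisfy ‖C(Δ) − C(Δ')‖ ≤ (‖Δ‖ + 1)·‖E‖/(1 − ‖E‖) + ‖E‖. -/
open scoped Matrix.Norms.L2Operator

/-- The Cayley transform of a matrix: `C(Δ) = (Δ - i I) (Δ + i I)⁻¹`. -/
noncomputable def cayleyTransform {N : ℕ} (Δ : Matrix (Fin N) (Fin N) ℂ) :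
    Matrix (Fin N) (Fin N) ℂ :=
  (Δ - Complex.I • 1) * (Δ + Complex.I • 1)⁻¹

noncomputable instance matCStar {N : ℕ} : CStarAlgebra (Matrix (Fin N) (Fin N) ℂ) := Matrix.instCStarAlgebra

lemma aux_isUnit {N : ℕ} (Δ : Matrix (Fin N) (Fin N) ℂ) (hΔ : IsSelfAdjoint Δ) :
    IsUnit (Δ + Complex.I • 1) := by
  have hne : (-Complex.I) ∉ spectrum ℂ Δ := by
    intro h
    have := hΔ.im_eq_zero_of_mem_spectrum h
    simp at this
  have := spectrum.notMem_iff.mp hne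
  rw [Algebra.algebraMap_eq_smul_one, neg_smul, neg_sub_left] at this
  simpa [add_comm] using this.neg

lemma aux_star {N : ℕ} (Δ : Matrix (Fin N) (Fin N) ℂ) (hΔ : IsSelfAdjoint Δ) :
    star (Δ + Complex.I • 1) = Δ - Complex.I • 1 := by
  rw [star_add, hΔ.star_eq, star_smul, star_one, Complex.star_def, Complex.conj_I, neg_smul,
    ← sub_eq_add_neg]

lemma aux_normal {N : ℕ} (Δ : Matrix (Fin N) (Fin N) ℂ) (hΔ : IsSelfAdjoint Δ) :
    IsStarNormal ((Δ + Complex.I • 1)⁻¹) := by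
  constructor
  have hcomm : star (Δ + Complex.I • 1) * (Δ + Complex.I • 1)
      = (Δ + Complex.I • 1) * star (Δ + Complex.I • 1) := by
    rw [aux_star Δ hΔ]
    simp only [mul_add, add_mul, sub_mul, mul_sub, mul_smul_comm, smul_mul_assoc, mul_one,
      one_mul, smul_smul, smul_add, smul_sub]
    module
  have h1 : star ((Δ + Complex.I • 1)⁻¹) = (star (Δ + Complex.I • 1))⁻¹ :=
    (Δ + Complex.I • 1).conjTranspose_nonsing_inv
  rw [h1]
  show _ * _ = _ * _
  rw [← Matrix.mul_inv_rev, ← hcomm, Matrix.mul_inv_rev]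

lemma aux_spec {N : ℕ} (Δ : Matrix (Fin N) (Fin N) ℂ) (hΔ : IsSelfAdjoint Δ)
    {z : ℂ} (hz : z ∈ spectrum ℂ ((Δ + Complex.I • 1)⁻¹)) : ‖z‖₊ ≤ 1 := by
  have hu := aux_isUnit Δ hΔ
  set u := hu.unit with hu'
  have hb : (Δ + Complex.I • 1)⁻¹ = ↑(u⁻¹) := by
    rw [Matrix.coe_units_inv, hu.unit_spec]
  rw [hb] at hz
  have hz0 : z ≠ 0 := by
    intro h
    rw [h] at hz
    exact spectrum.zero_notMem ℂ (u⁻¹).isUnit hz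
  have hinv : z⁻¹ ∈ spectrum ℂ (↑u : Matrix (Fin N) (Fin N) ℂ) := by
    have := (spectrum.inv_mem_iff (r := Units.mk0 z hz0) (a := u⁻¹)).mp hz
    simpa using this
  rw [hu.unit_spec] at hinv
  -- shift: z⁻¹ - I ∈ spectrum Δ
  have hshift : z⁻¹ - Complex.I ∈ spectrum ℂ Δ := by
    have h2 : (z⁻¹ - Complex.I) + Complex.I ∈ spectrum ℂ (Δ + Complex.I • 1) := by
      simpa using hinv
    have := spectrum.add_mem_iff.mp h2
    rw [Algebra.algebraMap_eq_smul_one] at this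
    simpa using this
  have him : (z⁻¹).im = 1 := by
    have h0 := hΔ.im_eq_zero_of_mem_spectrum hshift
    rw [Complex.sub_im, Complex.I_im, sub_eq_zero] at h0
    exact h0
  have h1 : (1 : ℝ) ≤ ‖z⁻¹‖ := by
    calc (1:ℝ) = |(z⁻¹).im| := by rw [him]; norm_num
    _ ≤ ‖z⁻¹‖ := Complex.abs_im_le_norm _
    _ = ‖z⁻¹‖ := rfl
  rw [norm_inv] at h1
  have : ‖z‖ ≤ 1 := ((one_le_inv_iff₀).mp h1).2
  exact_mod_cast this

lemma aux_norm_inv_le {N : ℕ} (Δ : Matrix (Fin N) (Fin N) ℂ) (hΔ : IsSelfAdjoint Δ) :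
    ‖(Δ + Complex.I • 1)⁻¹‖ ≤ 1 := by
  have hn : IsStarNormal ((Δ + Complex.I • 1)⁻¹) := aux_normal Δ hΔ
  have h := IsStarNormal.spectralRadius_eq_nnnorm ((Δ + Complex.I • 1)⁻¹)
  have hle : spectralRadius ℂ ((Δ + Complex.I • 1)⁻¹) ≤ 1 := by
    rw [spectralRadius]
    refine iSup₂_le fun z hz => ?_
    exact_mod_cast aux_spec Δ hΔ hz
  rw [h] at hle
  have h2 : ‖(Δ + Complex.I • 1)⁻¹‖₊ ≤ 1 := by exact_mod_cast hle
  exact_mod_cast h2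

/-- For self-adjoint `Δ` and `Δ' = Δ + E` with `‖E‖ < 1`,
`‖C(Δ) - C(Δ')‖ ≤ (‖Δ‖ + 1) ‖E‖ / (1 - ‖E‖) + ‖E‖`. -/
theorem norm_cayleyTransform_diff_le {N : ℕ} (Δ E : Matrix (Fin N) (Fin N) ℂ)
    (hΔ : IsSelfAdjoint Δ) (hΔ' : IsSelfAdjoint (Δ + E)) (hE : ‖E‖ < 1) :
    ‖cayleyTransform Δ - cayleyTransform (Δ + E)‖ ≤
      (‖Δ‖ + 1) * (‖E‖ / (1 - ‖E‖)) + ‖E‖ := by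
  set A := Δ + Complex.I • 1 with hA
  set A' := (Δ + E) + Complex.I • 1 with hA'
  have huA : IsUnit A := aux_isUnit Δ hΔ
  have huA' : IsUnit A' := aux_isUnit (Δ + E) hΔ'
  have hdA : IsUnit A.det := (Matrix.isUnit_iff_isUnit_det A).mp huA
  have hdA' : IsUnit A'.det := (Matrix.isUnit_iff_isUnit_det A').mp huA'
  set B := A⁻¹ with hB
  set B' := A'⁻¹ with hB'
  have hAB : A * B = 1 := Matrix.mul_nonsing_inv A hdA
  have hBA : B * A = 1 := Matrix.nonsing_inv_mul A hdA
  have hA'B' : A' * B' = 1 := Matrix.mul_nonsing_inv A' hdA'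
  have h1 : cayleyTransform Δ = 1 - (2 * Complex.I) • B := by
    rw [cayleyTransform]
    have hs : Δ - Complex.I • 1 = A - (2 * Complex.I) • 1 := by
      rw [hA]; module
    rw [hs, sub_mul, ← hB, hAB, smul_mul_assoc, one_mul]
  have h2 : cayleyTransform (Δ + E) = 1 - (2 * Complex.I) • B' := by
    rw [cayleyTransform]
    have hs : (Δ + E) - Complex.I • 1 = A' - (2 * Complex.I) • 1 := by
      rw [hA']; module
    rw [hs, sub_mul, ← hB', hA'B', smul_mul_assoc, one_mul]
  have hBB : B - B' = B * E * B' := by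
    have e1 : B * A' * B' = B := by rw [mul_assoc, hA'B', mul_one]
    have e2 : B * A * B' = B' := by rw [hBA, one_mul]
    have e3 : A' = A + E := by rw [hA, hA']; abel
    calc B - B' = B * A' * B' - B * A * B' := by rw [e1, e2]
    _ = B * (A' - A) * B' := by noncomm_ring
    _ = B * E * B' := by rw [e3]; congr 1; rw [add_sub_cancel_left]
  have hdiff : cayleyTransform Δ - cayleyTransform (Δ + E)
      = -((2 * Complex.I) • (B * E * B')) := by
    rw [h1, h2, ← hBB]; module
  have hnB : ‖B‖ ≤ 1 := aux_norm_inv_le Δ hΔ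
  have hnB' : ‖B'‖ ≤ 1 := aux_norm_inv_le (Δ + E) hΔ'
  have hprod : ‖B * E * B'‖ ≤ ‖E‖ := by
    calc ‖B * E * B'‖ ≤ ‖B * E‖ * ‖B'‖ := norm_mul_le _ _
    _ ≤ (‖B‖ * ‖E‖) * ‖B'‖ := by
        have := norm_mul_le B E
        have h0 : (0:ℝ) ≤ ‖B'‖ := norm_nonneg _
        nlinarith
    _ ≤ (1 * ‖E‖) * 1 := by
        gcongr
    _ = ‖E‖ := by ring
  have hmain : ‖cayleyTransform Δ - cayleyTransform (Δ + E)‖ ≤ 2 * ‖E‖ := by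
    rw [hdiff, norm_neg, norm_smul]
    have : ‖(2 * Complex.I : ℂ)‖ = 2 := by simp
    rw [this]
    linarith
  have h1e : (0:ℝ) < 1 - ‖E‖ := by linarith
  have hdiv : ‖E‖ ≤ ‖E‖ / (1 - ‖E‖) := by
    rw [le_div_iff₀ h1e]; nlinarith [norm_nonneg E]
  have hq : (0:ℝ) ≤ ‖E‖ / (1 - ‖E‖) := div_nonneg (norm_nonneg E) h1e.le
  nlinarith [norm_nonneg Δ]
end

section
/- Let Δ and Δ' = Δ + E be self-adjoint N×N complex matrices with ‖E‖ < 1, where ‖·‖ is the operator norm. Let c : ℕ → ℂ (indexed by l ≥ 1) satisfy Σ_{l=1}^{∞} l·|c_l| < ∞. Define G(Δ) := Σ_{l=1}^{∞} c_l · C(Δ)^l, where C(Δ) := (Δ − iI)(Δ + iI)^{-1} is the Cayley transform; this series converges absolutely in operator norm since C(Δ) is unitary and Σ_l |c_l| < ∞. Then ‖G(Δ) − G(Δ')‖ ≤ (Σ_{l=1}^{∞} l·|c_l|) · ( (‖Δ‖ + 1)·‖E‖/(1 − ‖E‖) + ‖E‖ ). -/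
open scoped Matrix.Norms.L2Operator

section Aux

open Matrix

variable {N : ℕ}

lemma l2_opNorm_le_of_forall {A : Matrix (Fin N) (Fin N) ℂ} {c : ℝ} (hc : 0 ≤ c)
    (h : ∀ y : EuclideanSpace ℂ (Fin N),
      ‖(EuclideanSpace.equiv (Fin N) ℂ).symm (A *ᵥ y)‖ ≤ c * ‖y‖) : ‖A‖ ≤ c := by
  rw [Matrix.l2_opNorm_def]
  exact ContinuousLinearMap.opNorm_le_bound _ hc h


lemma core_sq (Δ : Matrix (Fin N) (Fin N) ℂ) (hΔ : Δ.IsHermitian) (c : ℂ) (hc : c.re = 0)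
    (y : EuclideanSpace ℂ (Fin N)) :
    ‖(EuclideanSpace.equiv (Fin N) ℂ).symm ((Δ + c • 1) *ᵥ y)‖ ^ 2
      = ‖(EuclideanSpace.equiv (Fin N) ℂ).symm (Δ *ᵥ y)‖ ^ 2 + ‖c‖ ^ 2 * ‖y‖ ^ 2 := by
  have hmv : (Δ + c • 1) *ᵥ y = Δ *ᵥ y + c • (EuclideanSpace.equiv (Fin N) ℂ y) := by
    rw [Matrix.add_mulVec, Matrix.smul_mulVec, Matrix.one_mulVec]
    rfl
  have hsplit : (EuclideanSpace.equiv (Fin N) ℂ).symm ((Δ + c • 1) *ᵥ y)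
      = (EuclideanSpace.equiv (Fin N) ℂ).symm (Δ *ᵥ y) + c • y := by
    rw [hmv, map_add, _root_.map_smul, (EuclideanSpace.equiv (Fin N) ℂ).symm_apply_apply]
  rw [hsplit]
  set u := (EuclideanSpace.equiv (Fin N) ℂ).symm (Δ *ᵥ y) with hu
  have hue : u = Matrix.toEuclideanLin Δ y := rfl
  have hsym := (Matrix.isHermitian_iff_isSymmetric.mp hΔ)
  have hreal : starRingEnd ℂ (inner ℂ u y : ℂ) = (inner ℂ u y : ℂ) := by
    conv_lhs => rw [hue, inner_conj_symm, ← hsym y y, ← hue]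
  have him : (inner ℂ u y : ℂ).im = 0 := Complex.conj_eq_iff_im.mp hreal
  have hre : RCLike.re (inner ℂ u (c • y) : ℂ) = 0 := by
    rw [inner_smul_right]
    simp only [RCLike.re_to_complex, Complex.mul_re, hc, him]
    ring
  rw [@norm_add_sq ℂ, hre, norm_smul]
  simp
  ring


lemma norm_mulVec_ge (Δ : Matrix (Fin N) (Fin N) ℂ) (hΔ : Δ.IsHermitian) (c : ℂ) (hc : c.re = 0)
    (y : EuclideanSpace ℂ (Fin N)) :
    ‖c‖ * ‖y‖ ≤ ‖(EuclideanSpace.equiv (Fin N) ℂ).symm ((Δ + c • 1) *ᵥ y)‖ := by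
  have h := core_sq Δ hΔ c hc y
  have h2 : (‖c‖ * ‖y‖) ^ 2 ≤ ‖(EuclideanSpace.equiv (Fin N) ℂ).symm ((Δ + c • 1) *ᵥ y)‖ ^ 2 := by
    rw [h, mul_pow]
    exact le_add_of_nonneg_left (by positivity)
  exact (pow_le_pow_iff_left₀ (by positivity) (norm_nonneg _) two_ne_zero).mp h2


lemma isUnit_add (Δ : Matrix (Fin N) (Fin N) ℂ) (hΔ : Δ.IsHermitian) (c : ℂ) (hc : c.re = 0)
    (hc0 : c ≠ 0) : IsUnit (Δ + c • 1) := by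
  rw [← Matrix.mulVec_injective_iff_isUnit]
  intro v w hvw
  have hsub : (Δ + c • 1) *ᵥ (v - w) = 0 := by
    rw [Matrix.mulVec_sub, hvw, sub_self]
  have hge := norm_mulVec_ge Δ hΔ c hc ((EuclideanSpace.equiv (Fin N) ℂ).symm (v - w))
  have hveq : (Δ + c • 1) *ᵥ ((EuclideanSpace.equiv (Fin N) ℂ).symm (v - w)) = 0 := hsub
  rw [hveq] at hge
  simp only [map_zero, norm_zero] at hge
  have hcn : 0 < ‖c‖ := norm_pos_iff.mpr hc0
  have hnz : ‖(EuclideanSpace.equiv (Fin N) ℂ).symm (v - w)‖ = 0 := by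
    nlinarith [norm_nonneg ((EuclideanSpace.equiv (Fin N) ℂ).symm (v - w))]
  have h0 := norm_eq_zero.mp hnz
  have : v - w = 0 := (EuclideanSpace.equiv (Fin N) ℂ).symm.injective (h0.trans (map_zero _).symm)
  exact sub_eq_zero.mp this


lemma norm_resolvent_le (Δ : Matrix (Fin N) (Fin N) ℂ) (hΔ : Δ.IsHermitian) :
    ‖(Δ + Complex.I • 1)⁻¹‖ ≤ 1 := by
  apply l2_opNorm_le_of_forall zero_le_one
  intro x
  set y := (EuclideanSpace.equiv (Fin N) ℂ).symm ((Δ + Complex.I • 1)⁻¹ *ᵥ x) with hy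
  have hPy : (Δ + Complex.I • 1) *ᵥ y = EuclideanSpace.equiv (Fin N) ℂ x := by
    show (Δ + Complex.I • 1) *ᵥ ((Δ + Complex.I • 1)⁻¹ *ᵥ x) = _
    rw [Matrix.mulVec_mulVec, Matrix.mul_nonsing_inv _
      ((Matrix.isUnit_iff_isUnit_det _).mp (isUnit_add Δ hΔ Complex.I (by simp) Complex.I_ne_zero)),
      Matrix.one_mulVec]
    rfl
  have := norm_mulVec_ge Δ hΔ Complex.I (by simp) y
  rw [hPy] at this
  simp only [Complex.norm_I, one_mul] at this ⊢
  simpa using this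


lemma norm_cayley_le (Δ : Matrix (Fin N) (Fin N) ℂ) (hΔ : Δ.IsHermitian) :
    ‖cayleyTransform Δ‖ ≤ 1 := by
  apply l2_opNorm_le_of_forall zero_le_one
  intro x
  set y := (EuclideanSpace.equiv (Fin N) ℂ).symm ((Δ + Complex.I • 1)⁻¹ *ᵥ x) with hy
  have hPy : (Δ + Complex.I • 1) *ᵥ y = EuclideanSpace.equiv (Fin N) ℂ x := by
    show (Δ + Complex.I • 1) *ᵥ ((Δ + Complex.I • 1)⁻¹ *ᵥ x) = _
    rw [Matrix.mulVec_mulVec, Matrix.mul_nonsing_inv _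
      ((Matrix.isUnit_iff_isUnit_det _).mp (isUnit_add Δ hΔ Complex.I (by simp) Complex.I_ne_zero)),
      Matrix.one_mulVec]
    rfl
  have hCx : cayleyTransform Δ *ᵥ x = (Δ - Complex.I • 1) *ᵥ y := by
    rw [cayleyTransform, ← Matrix.mulVec_mulVec]
    rfl
  have hminus : Δ - Complex.I • 1 = Δ + (-Complex.I) • 1 := by
    rw [neg_smul, ← sub_eq_add_neg]
  have h1 := core_sq Δ hΔ (-Complex.I) (by simp) y
  have h2 := core_sq Δ hΔ Complex.I (by simp) y
  rw [← hminus] at h1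
  have hnn : ‖(EuclideanSpace.equiv (Fin N) ℂ).symm ((Δ - Complex.I • 1) *ᵥ y)‖
      = ‖(EuclideanSpace.equiv (Fin N) ℂ).symm ((Δ + Complex.I • 1) *ᵥ y)‖ := by
    have : ‖(EuclideanSpace.equiv (Fin N) ℂ).symm ((Δ - Complex.I • 1) *ᵥ y)‖ ^ 2
        = ‖(EuclideanSpace.equiv (Fin N) ℂ).symm ((Δ + Complex.I • 1) *ᵥ y)‖ ^ 2 := by
      rw [h1, h2]; simp
    exact (pow_le_pow_iff_left₀ (norm_nonneg _) (norm_nonneg _) two_ne_zero).mp this.le |>.antisymm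
      ((pow_le_pow_iff_left₀ (norm_nonneg _) (norm_nonneg _) two_ne_zero).mp this.ge)
  rw [hCx, hnn, hPy]
  simp


lemma cayley_eq_one_sub (Δ : Matrix (Fin N) (Fin N) ℂ) (hΔ : Δ.IsHermitian) :
    cayleyTransform Δ = 1 - (2 * Complex.I) • (Δ + Complex.I • 1)⁻¹ := by
  have hP : IsUnit (Δ + Complex.I • 1).det :=
    (Matrix.isUnit_iff_isUnit_det _).mp (isUnit_add Δ hΔ Complex.I (by simp) Complex.I_ne_zero)
  have hsub : Δ - Complex.I • 1 = (Δ + Complex.I • 1) - (2 * Complex.I) • 1 := by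
    rw [two_mul, add_smul]
    abel
  rw [cayleyTransform, hsub, Matrix.sub_mul, Matrix.mul_nonsing_inv _ hP, Matrix.smul_mul, one_mul]


lemma cayley_diff_eq (Δ E : Matrix (Fin N) (Fin N) ℂ) (hΔ : Δ.IsHermitian)
    (hΔ' : (Δ + E).IsHermitian) :
    cayleyTransform Δ - cayleyTransform (Δ + E) =
      -((2 * Complex.I) • ((Δ + Complex.I • 1)⁻¹ * E * (Δ + E + Complex.I • 1)⁻¹)) := by
  have hP : IsUnit (Δ + Complex.I • 1).det :=
    (Matrix.isUnit_iff_isUnit_det _).mp (isUnit_add Δ hΔ Complex.I (by simp) Complex.I_ne_zero)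
  have hP' : IsUnit (Δ + E + Complex.I • 1).det :=
    (Matrix.isUnit_iff_isUnit_det _).mp
      (isUnit_add (Δ + E) hΔ' Complex.I (by simp) Complex.I_ne_zero)
  rw [cayley_eq_one_sub Δ hΔ, cayley_eq_one_sub (Δ + E) hΔ']
  have hres : (Δ + E + Complex.I • 1)⁻¹ - (Δ + Complex.I • 1)⁻¹ =
      -((Δ + Complex.I • 1)⁻¹ * E * (Δ + E + Complex.I • 1)⁻¹) := by
    have h1 : (Δ + Complex.I • 1)⁻¹ * (Δ + Complex.I • 1) * (Δ + E + Complex.I • 1)⁻¹ =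
        (Δ + E + Complex.I • 1)⁻¹ := by
      rw [Matrix.nonsing_inv_mul _ hP, one_mul]
    have h2 : (Δ + Complex.I • 1)⁻¹ * (Δ + E + Complex.I • 1) * (Δ + E + Complex.I • 1)⁻¹ =
        (Δ + Complex.I • 1)⁻¹ := by
      rw [Matrix.mul_assoc, Matrix.mul_nonsing_inv _ hP', mul_one]
    calc (Δ + E + Complex.I • 1)⁻¹ - (Δ + Complex.I • 1)⁻¹
        = (Δ + Complex.I • 1)⁻¹ * (Δ + Complex.I • 1) * (Δ + E + Complex.I • 1)⁻¹
          - (Δ + Complex.I • 1)⁻¹ * (Δ + E + Complex.I • 1) * (Δ + E + Complex.I • 1)⁻¹ := by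
          rw [h1, h2]
      _ = -((Δ + Complex.I • 1)⁻¹ * E * (Δ + E + Complex.I • 1)⁻¹) := by
          rw [← Matrix.sub_mul, ← Matrix.mul_sub]
          simp only [add_sub_add_right_eq_sub, sub_add_cancel_left]
          noncomm_ring
  rw [sub_sub_sub_cancel_left, ← smul_sub, hres, smul_neg]


lemma norm_cayley_diff_le (Δ E : Matrix (Fin N) (Fin N) ℂ) (hΔ : Δ.IsHermitian)
    (hΔ' : (Δ + E).IsHermitian) :
    ‖cayleyTransform Δ - cayleyTransform (Δ + E)‖ ≤ 2 * ‖E‖ := by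
  rw [cayley_diff_eq Δ E hΔ hΔ', norm_neg, norm_smul]
  have h1 : ‖(2 : ℂ) * Complex.I‖ = 2 := by
    simp [norm_mul]
  rw [h1]
  have h2 : ‖(Δ + Complex.I • 1)⁻¹ * E * (Δ + E + Complex.I • 1)⁻¹‖ ≤ ‖E‖ := by
    calc ‖(Δ + Complex.I • 1)⁻¹ * E * (Δ + E + Complex.I • 1)⁻¹‖
        ≤ ‖(Δ + Complex.I • 1)⁻¹ * E‖ * ‖(Δ + E + Complex.I • 1)⁻¹‖ := Matrix.l2_opNorm_mul _ _
      _ ≤ ‖(Δ + Complex.I • 1)⁻¹‖ * ‖E‖ * ‖(Δ + E + Complex.I • 1)⁻¹‖ := by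
          gcongr
          exact Matrix.l2_opNorm_mul _ _
      _ ≤ 1 * ‖E‖ * 1 := by
          gcongr
          · exact norm_resolvent_le Δ hΔ
          · exact norm_resolvent_le (Δ + E) hΔ'
      _ = ‖E‖ := by ring
  linarith


lemma l2_norm_one_le : ‖(1 : Matrix (Fin N) (Fin N) ℂ)‖ ≤ 1 := by
  apply l2_opNorm_le_of_forall zero_le_one
  intro y
  rw [Matrix.one_mulVec]
  exact le_of_eq (by rw [one_mul]; rfl)


lemma l2_norm_pow_le {A : Matrix (Fin N) (Fin N) ℂ} (hA : ‖A‖ ≤ 1) (l : ℕ) : ‖A ^ l‖ ≤ 1 := by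
  induction l with
  | zero => simpa using l2_norm_one_le
  | succ n ih =>
    calc ‖A ^ (n + 1)‖ = ‖A ^ n * A‖ := by rw [pow_succ]
      _ ≤ ‖A ^ n‖ * ‖A‖ := Matrix.l2_opNorm_mul _ _
      _ ≤ 1 := mul_le_one₀ ih (norm_nonneg _) hA


lemma l2_norm_pow_sub_pow_le {A B : Matrix (Fin N) (Fin N) ℂ} (hA : ‖A‖ ≤ 1) (hB : ‖B‖ ≤ 1)
    (l : ℕ) : ‖A ^ l - B ^ l‖ ≤ l * ‖A - B‖ := by
  induction l with
  | zero => simp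
  | succ n ih =>
    have hid : A ^ (n + 1) - B ^ (n + 1) = A ^ n * (A - B) + (A ^ n - B ^ n) * B := by
      noncomm_ring
    calc ‖A ^ (n + 1) - B ^ (n + 1)‖ = ‖A ^ n * (A - B) + (A ^ n - B ^ n) * B‖ := by rw [hid]
      _ ≤ ‖A ^ n * (A - B)‖ + ‖(A ^ n - B ^ n) * B‖ := norm_add_le _ _
      _ ≤ ‖A ^ n‖ * ‖A - B‖ + ‖A ^ n - B ^ n‖ * ‖B‖ :=
          add_le_add (Matrix.l2_opNorm_mul _ _) (Matrix.l2_opNorm_mul _ _)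
      _ ≤ 1 * ‖A - B‖ + (n * ‖A - B‖) * 1 :=
          add_le_add (mul_le_mul_of_nonneg_right (l2_norm_pow_le hA n) (norm_nonneg _))
            (mul_le_mul ih hB (norm_nonneg _) (by positivity))
      _ = (n + 1 : ℕ) * ‖A - B‖ := by push_cast; ring

end Aux

open Matrix in
/-- For self-adjoint `Δ` and `Δ' = Δ + E` with `‖E‖ < 1`, and a Cayley filter
`G(Δ) = ∑_{l=1}^∞ c_l C(Δ)^l` with `∑_{l=1}^∞ l |c_l| < ∞`, the series defining `G` converges
absolutely in operator norm and
`‖G(Δ) - G(Δ')‖ ≤ (∑_{l=1}^∞ l |c_l|) ((‖Δ‖ + 1) ‖E‖ / (1 - ‖E‖) + ‖E‖)`. -/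
theorem norm_cayley_series_filter_diff_le {N : ℕ} (Δ E : Matrix (Fin N) (Fin N) ℂ)
    (hΔ : IsSelfAdjoint Δ) (hΔ' : IsSelfAdjoint (Δ + E)) (hE : ‖E‖ < 1)
    (c : ℕ → ℂ) (hc : Summable fun l : ℕ => (l : ℝ) * ‖c l‖) :
    Summable (fun l : ℕ => ‖c (l + 1) • cayleyTransform Δ ^ (l + 1)‖) ∧
    Summable (fun l : ℕ => ‖c (l + 1) • cayleyTransform (Δ + E) ^ (l + 1)‖) ∧
    ‖(∑' l : ℕ, c (l + 1) • cayleyTransform Δ ^ (l + 1)) -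
        ∑' l : ℕ, c (l + 1) • cayleyTransform (Δ + E) ^ (l + 1)‖ ≤
      (∑' l : ℕ, (l : ℝ) * ‖c l‖) *
        ((‖Δ‖ + 1) * (‖E‖ / (1 - ‖E‖)) + ‖E‖) := by
  have hΔh : Δ.IsHermitian := hΔ
  have hΔ'h : (Δ + E).IsHermitian := hΔ'
  set C := cayleyTransform Δ with hCdef
  set C' := cayleyTransform (Δ + E) with hC'def
  have hC : ‖C‖ ≤ 1 := norm_cayley_le Δ hΔh
  have hC' : ‖C'‖ ≤ 1 := norm_cayley_le (Δ + E) hΔ'h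
  have hE0 : (0 : ℝ) ≤ ‖E‖ := norm_nonneg E
  have hE1 : (0 : ℝ) < 1 - ‖E‖ := by linarith
  set B : ℝ := (‖Δ‖ + 1) * (‖E‖ / (1 - ‖E‖)) + ‖E‖ with hBdef
  have hEle : ‖E‖ ≤ ‖E‖ / (1 - ‖E‖) := by
    rw [le_div_iff₀ hE1]
    nlinarith
  have hB2 : 2 * ‖E‖ ≤ B := by
    have hΔ0 : (0 : ℝ) ≤ ‖Δ‖ := norm_nonneg Δ
    have hd0 : (0 : ℝ) ≤ ‖E‖ / (1 - ‖E‖) := div_nonneg hE0 hE1.le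
    show 2 * ‖E‖ ≤ (‖Δ‖ + 1) * (‖E‖ / (1 - ‖E‖)) + ‖E‖
    nlinarith
  have hB0 : (0 : ℝ) ≤ B := by linarith
  -- summability of coefficient majorant
  have hc1 : Summable fun l : ℕ => ((l : ℝ) + 1) * ‖c (l + 1)‖ := by
    have := (summable_nat_add_iff 1).mpr hc
    simpa [Nat.cast_add] using this
  have habs : ∀ l : ℕ, ‖c (l + 1)‖ ≤ ((l : ℝ) + 1) * ‖c (l + 1)‖ := by
    intro l
    nlinarith [norm_nonneg (c (l + 1)), (Nat.cast_nonneg l : (0:ℝ) ≤ l)]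
  have hS1 : Summable (fun l : ℕ => ‖c (l + 1) • C ^ (l + 1)‖) := by
    apply Summable.of_nonneg_of_le (fun l => norm_nonneg _) _ hc1
    intro l
    rw [norm_smul]
    calc ‖c (l + 1)‖ * ‖C ^ (l + 1)‖ ≤ ‖c (l + 1)‖ * 1 := by
          gcongr; exact l2_norm_pow_le hC _
      _ = ‖c (l + 1)‖ := by rw [mul_one]
      _ ≤ ((l : ℝ) + 1) * ‖c (l + 1)‖ := habs l
  have hS2 : Summable (fun l : ℕ => ‖c (l + 1) • C' ^ (l + 1)‖) := by
    apply Summable.of_nonneg_of_le (fun l => norm_nonneg _) _ hc1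
    intro l
    rw [norm_smul]
    calc ‖c (l + 1)‖ * ‖C' ^ (l + 1)‖ ≤ ‖c (l + 1)‖ * 1 := by
          gcongr; exact l2_norm_pow_le hC' _
      _ = ‖c (l + 1)‖ := by rw [mul_one]
      _ ≤ ((l : ℝ) + 1) * ‖c (l + 1)‖ := habs l
  refine ⟨hS1, hS2, ?_⟩
  have hsum1 : Summable (fun l : ℕ => c (l + 1) • C ^ (l + 1)) := hS1.of_norm
  have hsum2 : Summable (fun l : ℕ => c (l + 1) • C' ^ (l + 1)) := hS2.of_norm
  rw [← hsum1.tsum_sub hsum2]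
  have hterm : ∀ l : ℕ, ‖c (l + 1) • C ^ (l + 1) - c (l + 1) • C' ^ (l + 1)‖ ≤
      (((l : ℝ) + 1) * ‖c (l + 1)‖) * B := by
    intro l
    rw [← smul_sub, norm_smul]
    have h1 : ‖C ^ (l + 1) - C' ^ (l + 1)‖ ≤ ((l : ℝ) + 1) * ‖C - C'‖ := by
      have := l2_norm_pow_sub_pow_le hC hC' (l + 1)
      push_cast at this
      exact this
    have h2 : ‖C - C'‖ ≤ 2 * ‖E‖ := norm_cayley_diff_le Δ E hΔh hΔ'h
    calc ‖c (l + 1)‖ * ‖C ^ (l + 1) - C' ^ (l + 1)‖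
        ≤ ‖c (l + 1)‖ * (((l : ℝ) + 1) * B) := by
          gcongr
          calc ‖C ^ (l + 1) - C' ^ (l + 1)‖ ≤ ((l : ℝ) + 1) * ‖C - C'‖ := h1
            _ ≤ ((l : ℝ) + 1) * (2 * ‖E‖) := by
                have : (0:ℝ) ≤ (l : ℝ) + 1 := by positivity
                exact mul_le_mul_of_nonneg_left h2 this
            _ ≤ ((l : ℝ) + 1) * B := by
                have : (0:ℝ) ≤ (l : ℝ) + 1 := by positivity
                exact mul_le_mul_of_nonneg_left hB2 this
      _ = (((l : ℝ) + 1) * ‖c (l + 1)‖) * B := by ring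
  have hSd : Summable (fun l : ℕ => ‖c (l + 1) • C ^ (l + 1) - c (l + 1) • C' ^ (l + 1)‖) := by
    apply Summable.of_nonneg_of_le (fun l => norm_nonneg _) hterm (hc1.mul_right B)
  calc ‖∑' l : ℕ, (c (l + 1) • C ^ (l + 1) - c (l + 1) • C' ^ (l + 1))‖
      ≤ ∑' l : ℕ, ‖c (l + 1) • C ^ (l + 1) - c (l + 1) • C' ^ (l + 1)‖ :=
        norm_tsum_le_tsum_norm hSd
    _ ≤ ∑' l : ℕ, (((l : ℝ) + 1) * ‖c (l + 1)‖) * B :=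
        Summable.tsum_le_tsum hterm hSd (hc1.mul_right B)
    _ = (∑' l : ℕ, ((l : ℝ) + 1) * ‖c (l + 1)‖) * B := by
        rw [tsum_mul_right]
    _ = (∑' l : ℕ, (l : ℝ) * ‖c l‖) * B := by
        congr 1
        have h0 : ((0 : ℕ) : ℝ) * ‖c 0‖ = 0 := by simp
        rw [hc.tsum_eq_zero_add, h0, zero_add]
        push_cast
        rfl
end

section
/- Let M > 0, let p and d be polynomials with complex coefficients such that d(λ) ≠ 0 for every λ ∈ [0, M], and let g = p/d. Then there exists a constant K > 0 (depending only on p, d, and M) such that for all N and all self-adjoint N×N complex matrices Δ and Δ' whose spectra are contained in [0, M], ‖g(Δ) − g(Δ')‖ ≤ K·‖Δ − Δ'‖, where g(Δ) := p(Δ)·d(Δ)^{-1} and ‖·‖ is the operator norm. In particular, rational spectral filters (as in ARMA filters) on graphs with uniformly bounded Laplacians are linearly stable. -/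
set_option maxHeartbeats 1000000

open scoped Matrix.Norms.L2Operator
open Polynomial Finset

noncomputable instance matCStarAuxRFLS (n : Type*) [Fintype n] [DecidableEq n] [Nonempty n] :
    CStarAlgebra (Matrix n n ℂ) where

namespace RFLSAux

variable {n : Type*} [Fintype n] [DecidableEq n] [Nonempty n]

lemma norm_le_of_spectrum {M : ℝ} (hM : 0 ≤ M) (Δ : Matrix n n ℂ) (hΔ : IsSelfAdjoint Δ)
    (hs : spectrum ℂ Δ ⊆ (fun x : ℝ => (x : ℂ)) '' Set.Icc 0 M) : ‖Δ‖ ≤ M := by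
  rw [← cfc_id ℂ Δ hΔ.isStarNormal]
  apply norm_cfc_le hM
  rintro x hx
  obtain ⟨y, hy, rfl⟩ := hs hx
  simpa [abs_of_nonneg hy.1] using hy.2

lemma inv_eq_cfc (d : ℂ[X]) (Δ : Matrix n n ℂ) (hΔ : IsSelfAdjoint Δ)
    (hd0 : ∀ x ∈ spectrum ℂ Δ, d.eval x ≠ 0) :
    (aeval Δ d)⁻¹ = cfc (fun z : ℂ => (d.eval z)⁻¹) Δ := by
  rw [cfc_inv (a := Δ) (f := fun z : ℂ => d.eval z) hd0 (by fun_prop) hΔ.isStarNormal,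
    cfc_polynomial d Δ hΔ.isStarNormal, Matrix.nonsing_inv_eq_ringInverse]

lemma inv_mul_cancel_poly (d : ℂ[X]) (Δ : Matrix n n ℂ) (hΔ : IsSelfAdjoint Δ)
    (hd0 : ∀ x ∈ spectrum ℂ Δ, d.eval x ≠ 0) :
    (aeval Δ d)⁻¹ * aeval Δ d = 1 := by
  have hcont : ContinuousOn (fun z : ℂ => (d.eval z)⁻¹) (spectrum ℂ Δ) :=
    ContinuousOn.inv₀ (d.continuous.continuousOn) hd0
  rw [inv_eq_cfc d Δ hΔ hd0, ← cfc_polynomial d Δ hΔ.isStarNormal,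
    ← cfc_mul _ _ Δ hcont (by fun_prop),
    cfc_congr (g := fun _ : ℂ => (1 : ℂ)) fun x hx => inv_mul_cancel₀ (hd0 x hx)]
  exact cfc_const_one ℂ Δ hΔ.isStarNormal

lemma mul_inv_cancel_poly (d : ℂ[X]) (Δ : Matrix n n ℂ) (hΔ : IsSelfAdjoint Δ)
    (hd0 : ∀ x ∈ spectrum ℂ Δ, d.eval x ≠ 0) :
    aeval Δ d * (aeval Δ d)⁻¹ = 1 := by
  have hcont : ContinuousOn (fun z : ℂ => (d.eval z)⁻¹) (spectrum ℂ Δ) :=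
    ContinuousOn.inv₀ (d.continuous.continuousOn) hd0
  rw [inv_eq_cfc d Δ hΔ hd0, ← cfc_polynomial d Δ hΔ.isStarNormal,
    ← cfc_mul _ _ Δ (by fun_prop) hcont,
    cfc_congr (g := fun _ : ℂ => (1 : ℂ)) fun x hx => mul_inv_cancel₀ (hd0 x hx)]
  exact cfc_const_one ℂ Δ hΔ.isStarNormal

lemma inv_comm_poly (p d : ℂ[X]) (Δ : Matrix n n ℂ) (hΔ : IsSelfAdjoint Δ)
    (hd0 : ∀ x ∈ spectrum ℂ Δ, d.eval x ≠ 0) :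
    (aeval Δ d)⁻¹ * aeval Δ p = aeval Δ p * (aeval Δ d)⁻¹ := by
  have hcont : ContinuousOn (fun z : ℂ => (d.eval z)⁻¹) (spectrum ℂ Δ) :=
    ContinuousOn.inv₀ (d.continuous.continuousOn) hd0
  rw [inv_eq_cfc d Δ hΔ hd0, ← cfc_polynomial p Δ hΔ.isStarNormal,
    ← cfc_mul _ _ Δ hcont (by fun_prop), ← cfc_mul _ _ Δ (by fun_prop) hcont]
  exact cfc_congr fun x _ => mul_comm _ _

lemma inv_norm_le (d : ℂ[X]) {ε : ℝ} (hε : 0 < ε) (Δ : Matrix n n ℂ) (hΔ : IsSelfAdjoint Δ)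
    (hd0 : ∀ x ∈ spectrum ℂ Δ, ε ≤ ‖d.eval x‖) :
    ‖(aeval Δ d)⁻¹‖ ≤ ε⁻¹ := by
  have hne : ∀ x ∈ spectrum ℂ Δ, d.eval x ≠ 0 := by
    intro x hx h
    have := hd0 x hx
    rw [h, norm_zero] at this
    linarith
  rw [inv_eq_cfc d Δ hΔ hne]
  apply norm_cfc_le (inv_nonneg.mpr hε.le)
  intro x hx
  rw [norm_inv]
  exact inv_anti₀ hε (hd0 x hx)

lemma norm_pow_le_aux (a : Matrix n n ℂ) (i : ℕ) : ‖a ^ i‖ ≤ ‖a‖ ^ i := by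
  induction i with
  | zero => simp
  | succ i ih =>
    rw [pow_succ, pow_succ]
    exact le_trans (norm_mul_le _ _)
      (mul_le_mul ih le_rfl (norm_nonneg _) (pow_nonneg (norm_nonneg _) _))

lemma pow_lip {M : ℝ} (hM : 0 ≤ M) (a b : Matrix n n ℂ) (ha : ‖a‖ ≤ M) (hb : ‖b‖ ≤ M)
    (i : ℕ) : ‖a ^ i - b ^ i‖ ≤ i * M ^ (i - 1) * ‖a - b‖ := by
  induction i with
  | zero => simp
  | succ i ih =>
    have key : a ^ (i + 1) - b ^ (i + 1) = a ^ i * (a - b) + (a ^ i - b ^ i) * b := by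
      noncomm_ring
    have hpa : ‖a ^ i‖ ≤ M ^ i :=
      le_trans (norm_pow_le_aux a i) (pow_le_pow_left₀ (norm_nonneg _) ha i)
    have hM' : (i : ℝ) * M ^ (i - 1) * M = i * M ^ i := by
      cases i with
      | zero => simp
      | succ j => rw [mul_assoc, ← pow_succ]; simp
    calc ‖a ^ (i + 1) - b ^ (i + 1)‖ ≤ ‖a ^ i * (a - b)‖ + ‖(a ^ i - b ^ i) * b‖ := by
          rw [key]; exact norm_add_le _ _
      _ ≤ M ^ i * ‖a - b‖ + (i * M ^ (i - 1) * ‖a - b‖) * M := by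
          gcongr
          · exact le_trans (norm_mul_le _ _)
              (mul_le_mul hpa le_rfl (norm_nonneg _) (pow_nonneg hM i))
          · exact le_trans (norm_mul_le _ _)
              (mul_le_mul ih hb (norm_nonneg _)
                (by positivity))
      _ = (i + 1 : ℕ) * M ^ ((i + 1) - 1) * ‖a - b‖ := by
          push_cast
          linear_combination ‖a - b‖ * hM'

lemma aeval_lip (f : ℂ[X]) {M : ℝ} (hM : 0 ≤ M) (a b : Matrix n n ℂ)
    (ha : ‖a‖ ≤ M) (hb : ‖b‖ ≤ M) :
    ‖aeval a f - aeval b f‖ ≤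
      (∑ i ∈ range (f.natDegree + 1), ‖f.coeff i‖ * i * M ^ (i - 1)) * ‖a - b‖ := by
  rw [aeval_eq_sum_range, aeval_eq_sum_range, ← Finset.sum_sub_distrib, Finset.sum_mul]
  refine le_trans (norm_sum_le _ _) (Finset.sum_le_sum fun i _ => ?_)
  rw [← smul_sub, norm_smul]
  calc ‖f.coeff i‖ * ‖a ^ i - b ^ i‖ ≤ ‖f.coeff i‖ * (i * M ^ (i - 1) * ‖a - b‖) := by
        gcongr; exact pow_lip hM a b ha hb i
    _ = ‖f.coeff i‖ * i * M ^ (i - 1) * ‖a - b‖ := by ring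

lemma aeval_bound (f : ℂ[X]) {M : ℝ} (hM : 0 ≤ M) (a : Matrix n n ℂ) (ha : ‖a‖ ≤ M) :
    ‖aeval a f‖ ≤ ∑ i ∈ range (f.natDegree + 1), ‖f.coeff i‖ * M ^ i := by
  rw [aeval_eq_sum_range]
  refine le_trans (norm_sum_le _ _) (Finset.sum_le_sum fun i _ => ?_)
  rw [norm_smul]
  gcongr
  exact le_trans (norm_pow_le_aux a i) (pow_le_pow_left₀ (norm_nonneg _) ha i)

end RFLSAux

/-- Let `M > 0` and let `p, d` be complex polynomials with `d` nonvanishing on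
`[0, M]`. Then there is `K > 0` such that for all `N` and all self-adjoint `N × N` complex
matrices `Δ, Δ'` with spectra contained in `[0, M]`,
`‖p(Δ) d(Δ)⁻¹ - p(Δ') d(Δ')⁻¹‖ ≤ K ‖Δ - Δ'‖`. -/
theorem rational_filter_linearly_stable (M : ℝ) (hM : 0 < M) (p d : Polynomial ℂ)
    (hd : ∀ x : ℝ, x ∈ Set.Icc 0 M → d.eval (x : ℂ) ≠ 0) :
    ∃ K > 0, ∀ (N : ℕ) (Δ Δ' : Matrix (Fin N) (Fin N) ℂ),
      IsSelfAdjoint Δ → IsSelfAdjoint Δ' →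
      spectrum ℂ Δ ⊆ (fun x : ℝ => (x : ℂ)) '' Set.Icc 0 M →
      spectrum ℂ Δ' ⊆ (fun x : ℝ => (x : ℂ)) '' Set.Icc 0 M →
      ‖Polynomial.aeval Δ p * (Polynomial.aeval Δ d)⁻¹ -
          Polynomial.aeval Δ' p * (Polynomial.aeval Δ' d)⁻¹‖ ≤ K * ‖Δ - Δ'‖ := by
  -- minimum of ‖d‖ on [0, M]
  obtain ⟨x₀, hx₀, hmin⟩ :=
    (isCompact_Icc (a := (0:ℝ)) (b := M)).exists_isMinOn (Set.nonempty_Icc.mpr hM.le)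
      ((d.continuous.comp Complex.continuous_ofReal).norm.continuousOn)
  set ε : ℝ := ‖d.eval (x₀ : ℂ)‖ with hεdef
  have hε : 0 < ε := norm_pos_iff.mpr (hd x₀ hx₀)
  have hεle : ∀ x ∈ Set.Icc (0:ℝ) M, ε ≤ ‖d.eval (x : ℂ)‖ := fun x hx => hmin hx
  -- constants
  set Bp : ℝ := ∑ i ∈ range (p.natDegree + 1), ‖p.coeff i‖ * M ^ i with hBp
  set Bd : ℝ := ∑ i ∈ range (d.natDegree + 1), ‖d.coeff i‖ * M ^ i with hBd
  set Lp : ℝ := ∑ i ∈ range (p.natDegree + 1), ‖p.coeff i‖ * i * M ^ (i - 1) with hLp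
  set Ld : ℝ := ∑ i ∈ range (d.natDegree + 1), ‖d.coeff i‖ * i * M ^ (i - 1) with hLd
  have hBp0 : 0 ≤ Bp := Finset.sum_nonneg fun i _ => by positivity
  have hBd0 : 0 ≤ Bd := Finset.sum_nonneg fun i _ => by positivity
  have hLp0 : 0 ≤ Lp := Finset.sum_nonneg fun i _ => by positivity
  have hLd0 : 0 ≤ Ld := Finset.sum_nonneg fun i _ => by positivity
  have hK0 : 0 ≤ ε⁻¹ * (Bp * Ld + Bd * Lp) * ε⁻¹ :=
    mul_nonneg (mul_nonneg (inv_nonneg.mpr hε.le)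
      (add_nonneg (mul_nonneg hBp0 hLd0) (mul_nonneg hBd0 hLp0))) (inv_nonneg.mpr hε.le)
  refine ⟨ε⁻¹ * (Bp * Ld + Bd * Lp) * ε⁻¹ + 1, by linarith, ?_⟩
  intro N Δ Δ' hsa hsa' hs hs'
  rcases Nat.eq_zero_or_pos N with rfl | hN
  · have hΔ : Δ = Δ' := by ext i j; exact i.elim0
    simp [hΔ]
  haveI : Nonempty (Fin N) := ⟨⟨0, hN⟩⟩
  -- spectrum facts
  have hd0 : ∀ x ∈ spectrum ℂ Δ, d.eval x ≠ 0 := by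
    rintro x hx; obtain ⟨y, hy, rfl⟩ := hs hx; exact hd y hy
  have hd0' : ∀ x ∈ spectrum ℂ Δ', d.eval x ≠ 0 := by
    rintro x hx; obtain ⟨y, hy, rfl⟩ := hs' hx; exact hd y hy
  have hdε : ∀ x ∈ spectrum ℂ Δ, ε ≤ ‖d.eval x‖ := by
    rintro x hx; obtain ⟨y, hy, rfl⟩ := hs hx; exact hεle y hy
  have hdε' : ∀ x ∈ spectrum ℂ Δ', ε ≤ ‖d.eval x‖ := by
    rintro x hx; obtain ⟨y, hy, rfl⟩ := hs' hx; exact hεle y hy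
  have hnΔ : ‖Δ‖ ≤ M := RFLSAux.norm_le_of_spectrum hM.le Δ hsa hs
  have hnΔ' : ‖Δ'‖ ≤ M := RFLSAux.norm_le_of_spectrum hM.le Δ' hsa' hs'
  set P := Polynomial.aeval Δ p
  set D := Polynomial.aeval Δ d
  set P' := Polynomial.aeval Δ' p
  set D' := Polynomial.aeval Δ' d
  have h2 : D⁻¹ * D = 1 := RFLSAux.inv_mul_cancel_poly d Δ hsa hd0
  have h1 : D' * D'⁻¹ = 1 := RFLSAux.mul_inv_cancel_poly d Δ' hsa' hd0'
  have hc : D⁻¹ * P = P * D⁻¹ := RFLSAux.inv_comm_poly p d Δ hsa hd0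
  have key : P * D⁻¹ - P' * D'⁻¹ = D⁻¹ * (P * D' - D * P') * D'⁻¹ := by
    have expand : D⁻¹ * (P * D' - D * P') * D'⁻¹
        = (D⁻¹ * P) * (D' * D'⁻¹) - (D⁻¹ * D) * (P' * D'⁻¹) := by noncomm_ring
    rw [expand, hc, h1, h2, mul_one, one_mul]
  have hPD : P * D = D * P := by
    simp only [P, D, ← map_mul, mul_comm]
  have hsplit : P * D' - D * P' = P * (D' - D) + D * (P - P') := by
    rw [mul_sub, mul_sub, hPD]; abel
  have hmid : ‖P * D' - D * P'‖ ≤ (Bp * Ld + Bd * Lp) * ‖Δ - Δ'‖ := by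
    rw [hsplit]
    have e1 : ‖P * (D' - D)‖ ≤ Bp * (Ld * ‖Δ - Δ'‖) := by
      refine le_trans (norm_mul_le _ _) (mul_le_mul ?_ ?_ (norm_nonneg _) hBp0)
      · rw [hBp]; exact RFLSAux.aeval_bound p hM.le Δ hnΔ
      · have h := RFLSAux.aeval_lip d hM.le Δ' Δ hnΔ' hnΔ
        rw [norm_sub_rev Δ' Δ] at h
        rw [hLd]
        exact h
    have e2 : ‖D * (P - P')‖ ≤ Bd * (Lp * ‖Δ - Δ'‖) := by
      refine le_trans (norm_mul_le _ _) (mul_le_mul ?_ ?_ (norm_nonneg _) hBd0)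
      · rw [hBd]; exact RFLSAux.aeval_bound d hM.le Δ hnΔ
      · rw [hLp]; exact RFLSAux.aeval_lip p hM.le Δ Δ' hnΔ hnΔ'
    calc ‖P * (D' - D) + D * (P - P')‖ ≤ ‖P * (D' - D)‖ + ‖D * (P - P')‖ := norm_add_le _ _
      _ ≤ Bp * (Ld * ‖Δ - Δ'‖) + Bd * (Lp * ‖Δ - Δ'‖) := add_le_add e1 e2
      _ = (Bp * Ld + Bd * Lp) * ‖Δ - Δ'‖ := by ring
  have hinv : ‖D⁻¹‖ ≤ ε⁻¹ := RFLSAux.inv_norm_le d hε Δ hsa hdε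
  have hinv' : ‖D'⁻¹‖ ≤ ε⁻¹ := RFLSAux.inv_norm_le d hε Δ' hsa' hdε'
  calc ‖P * D⁻¹ - P' * D'⁻¹‖ = ‖D⁻¹ * (P * D' - D * P') * D'⁻¹‖ := by rw [key]
    _ ≤ ‖D⁻¹‖ * ‖P * D' - D * P'‖ * ‖D'⁻¹‖ :=
        le_trans (norm_mul_le _ _)
          (mul_le_mul_of_nonneg_right (norm_mul_le _ _) (norm_nonneg _))
    _ ≤ ε⁻¹ * ((Bp * Ld + Bd * Lp) * ‖Δ - Δ'‖) * ε⁻¹ := by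
        have hmid0 : (0:ℝ) ≤ (Bp * Ld + Bd * Lp) * ‖Δ - Δ'‖ :=
          mul_nonneg (add_nonneg (mul_nonneg hBp0 hLd0) (mul_nonneg hBd0 hLp0)) (norm_nonneg _)
        exact mul_le_mul
          (mul_le_mul hinv hmid (norm_nonneg _) (inv_nonneg.mpr hε.le)) hinv'
          (norm_nonneg _) (mul_nonneg (inv_nonneg.mpr hε.le) hmid0)
    _ ≤ (ε⁻¹ * (Bp * Ld + Bd * Lp) * ε⁻¹ + 1) * ‖Δ - Δ'‖ := by
        have ht : (0:ℝ) ≤ ‖Δ - Δ'‖ := norm_nonneg _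
        nlinarith [inv_nonneg.mpr hε.le, mul_nonneg hBp0 hLd0, mul_nonneg hBd0 hLp0]
end
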